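/- arXiv:math-ph/0301038 — 3 statements merged into one kernel-verified Lean document; each statement's English description precedes it below -/
import Mathlib

section
/- Let B > 0, F ∈ ℝ, u = F/B, let t > 0 satisfy sin(Bt) ≠ 0, and let (x₀,y₀), (x,y) ∈ ℝ². Let w_cl be the classical trajectory w_x^{cl}(s) = (1/2)[(y−y₀−ut)+(x−x₀)cot(Bt)]sin(2Bs) − (1/2)[(x−x₀)−(y−y₀−ut)cot(Bt)]cos(2Bs) + (1/2)[(x+x₀)−(y−y₀−ut)cot(Bt)], w_y^{cl}(s) = −(1/2)[(x−x₀)−(y−y₀−ut)cot(Bt)]sin(2Bs) − (1/2)[(y−y₀−ut)+(x−x₀)cot(Bt)]cos(2Bs) + (1/2)[(y+y₀−ut)+(x−x₀)cot(Bt)] + us. Then the classical action satisfies S_t[w_cl] = ∫₀ᵗ L(w_cl(s), ẇ_cl(s)) ds = (F²/(4B²))t + (F/(2B))(y−y₀−(F/B)t) − (B/2)(x+x₀)(y−y₀−(F/B)t) + (B/4)cot(Bt)[(y−y₀−(F/B)t)² + (x−x₀)²]. -/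
open intervalIntegral

/-- The action `S_t[w] = ∫₀ᵗ L(w(s), ẇ(s)) ds` over `[0,t]` for the Lagrangian
`L(w, ẇ) = (1/4)(ẇₓ² + ẇ_y²) + F·wₓ − B·ẇ_y·wₓ` of a planar charged particle in
crossed constant magnetic and electric fields. -/
noncomputable def action (B F t : ℝ) (wx wy : ℝ → ℝ) : ℝ :=
  ∫ s in (0:ℝ)..t,
    ((1/4) * ((deriv wx s)^2 + (deriv wy s)^2) + F * wx s - B * deriv wy s * wx s)

lemma action_eval (B F u A C Dx Dy t : ℝ) (hF : F = B*u) :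
    action B F t (fun s => A*Real.sin (2*B*s) - C*Real.cos (2*B*s) + Dx)
      (fun s => -C*Real.sin (2*B*s) - A*Real.cos (2*B*s) + Dy + u*s)
    = u^2/4*t + (u/2 - B*Dx)*(A - A*Real.cos (2*B*t) - C*Real.sin (2*B*t))
      + B*(A^2-C^2)/2*(Real.sin (2*B*t)*Real.cos (2*B*t)) + B*A*C*(Real.sin (2*B*t))^2 := by
  subst hF
  have hlin : ∀ s : ℝ, HasDerivAt (fun s : ℝ => 2*B*s) (2*B) s := by
    intro s
    simpa using (hasDerivAt_id s).const_mul (2*B)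
  have hsin : ∀ s : ℝ, HasDerivAt (fun s : ℝ => Real.sin (2*B*s))
      (Real.cos (2*B*s) * (2*B)) s := fun s =>
    (Real.hasDerivAt_sin (2*B*s)).comp s (hlin s)
  have hcos : ∀ s : ℝ, HasDerivAt (fun s : ℝ => Real.cos (2*B*s))
      (-Real.sin (2*B*s) * (2*B)) s := fun s =>
    (Real.hasDerivAt_cos (2*B*s)).comp s (hlin s)
  have hwx : ∀ s : ℝ, HasDerivAt (fun s => A*Real.sin (2*B*s) - C*Real.cos (2*B*s) + Dx)
      (2*B*(A*Real.cos (2*B*s) + C*Real.sin (2*B*s))) s := by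
    intro s
    have := (((hsin s).const_mul A).sub ((hcos s).const_mul C)).add_const Dx
    exact this.congr_deriv (by ring)
  have hwy : ∀ s : ℝ, HasDerivAt (fun s => -C*Real.sin (2*B*s) - A*Real.cos (2*B*s) + Dy + u*s)
      (2*B*(A*Real.sin (2*B*s) - C*Real.cos (2*B*s)) + u) s := by
    intro s
    have := ((((hsin s).const_mul (-C)).sub ((hcos s).const_mul A)).add_const Dy).add
      ((hasDerivAt_id s).const_mul u)
    exact this.congr_deriv (by ring)
  have dwx : deriv (fun s => A*Real.sin (2*B*s) - C*Real.cos (2*B*s) + Dx)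
      = fun s => 2*B*(A*Real.cos (2*B*s) + C*Real.sin (2*B*s)) :=
    funext fun s => (hwx s).deriv
  have dwy : deriv (fun s => -C*Real.sin (2*B*s) - A*Real.cos (2*B*s) + Dy + u*s)
      = fun s => 2*B*(A*Real.sin (2*B*s) - C*Real.cos (2*B*s)) + u :=
    funext fun s => (hwy s).deriv
  rw [action, dwx, dwy]
  set f : ℝ → ℝ := fun s =>
    (1/4) * ((2*B*(A*Real.cos (2*B*s) + C*Real.sin (2*B*s)))^2
      + (2*B*(A*Real.sin (2*B*s) - C*Real.cos (2*B*s)) + u)^2)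
    + (B*u) * (A*Real.sin (2*B*s) - C*Real.cos (2*B*s) + Dx)
    - B * (2*B*(A*Real.sin (2*B*s) - C*Real.cos (2*B*s)) + u)
        * (A*Real.sin (2*B*s) - C*Real.cos (2*B*s) + Dx) with hf
  set Φ : ℝ → ℝ := fun s =>
    u^2/4*s + (u/2 - B*Dx)*(A - A*Real.cos (2*B*s) - C*Real.sin (2*B*s))
      + B*(A^2-C^2)/2*(Real.sin (2*B*s)*Real.cos (2*B*s)) + B*A*C*(Real.sin (2*B*s))^2
    with hΦ
  have hΦ' : ∀ s : ℝ, HasDerivAt Φ (f s) s := by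
    intro s
    have h1 : HasDerivAt (fun s : ℝ => u^2/4*s) (u^2/4) s := by
      simpa using (hasDerivAt_id s).const_mul (u^2/4)
    have h2 : HasDerivAt (fun s : ℝ => (u/2 - B*Dx)*(A - A*Real.cos (2*B*s) - C*Real.sin (2*B*s)))
        ((u/2 - B*Dx)*(-(A*(-Real.sin (2*B*s) * (2*B))) - C*(Real.cos (2*B*s) * (2*B)))) s := by
      exact ((((hcos s).const_mul A).const_sub A).sub ((hsin s).const_mul C)).const_mul _
    have h3 : HasDerivAt (fun s : ℝ => B*(A^2-C^2)/2*(Real.sin (2*B*s)*Real.cos (2*B*s)))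
        (B*(A^2-C^2)/2*(Real.cos (2*B*s) * (2*B)*Real.cos (2*B*s)
          + Real.sin (2*B*s)*(-Real.sin (2*B*s) * (2*B)))) s :=
      ((hsin s).mul (hcos s)).const_mul _
    have h4 : HasDerivAt (fun s : ℝ => B*A*C*(Real.sin (2*B*s))^2)
        (B*A*C*(2*Real.sin (2*B*s)*(Real.cos (2*B*s) * (2*B)))) s := by
      have := ((hsin s).pow 2).const_mul (B*A*C)
      exact this.congr_deriv (by ring)
    have := ((h1.add h2).add h3).add h4
    exact this.congr_deriv (by simp only [hf]; ring)
  rw [intervalIntegral.integral_eq_sub_of_hasDerivAt (fun s _ => hΦ' s)]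
  · rw [hΦ]
    norm_num
  · apply Continuous.intervalIntegrable
    rw [hf]
    fun_prop

set_option maxHeartbeats 2000000 in
/-- The classical action of the crossed-fields trajectory joining `(x₀,y₀)` at time `0`
to `(x,y)` at time `t` equals
`(F²/(4B²))t + (F/(2B))(y−y₀−(F/B)t) − (B/2)(x+x₀)(y−y₀−(F/B)t)
  + (B/4)cot(Bt)[(y−y₀−(F/B)t)² + (x−x₀)²]`. -/
theorem stmt4 (B F t x₀ y₀ x y : ℝ) (hB : 0 < B) (ht : 0 < t)
    (hs : Real.sin (B*t) ≠ 0) :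
    let u : ℝ := F / B
    let c : ℝ := Real.cot (B*t)
    let wx : ℝ → ℝ := fun s =>
      (1/2) * ((y - y₀ - u*t) + (x - x₀)*c) * Real.sin (2*B*s)
      - (1/2) * ((x - x₀) - (y - y₀ - u*t)*c) * Real.cos (2*B*s)
      + (1/2) * ((x + x₀) - (y - y₀ - u*t)*c)
    let wy : ℝ → ℝ := fun s =>
      -(1/2) * ((x - x₀) - (y - y₀ - u*t)*c) * Real.sin (2*B*s)
      - (1/2) * ((y - y₀ - u*t) + (x - x₀)*c) * Real.cos (2*B*s)
      + (1/2) * ((y + y₀ - u*t) + (x - x₀)*c) + u*s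
    action B F t wx wy =
      F^2/(4*B^2) * t + F/(2*B) * (y - y₀ - F/B*t)
      - B/2 * (x + x₀) * (y - y₀ - F/B*t)
      + B/4 * Real.cot (B*t) * ((y - y₀ - F/B*t)^2 + (x - x₀)^2) := by
  have hB' : B ≠ 0 := hB.ne'
  intro u c wx wy
  have hF : F = B * u := by
    show F = B * (F/B)
    field_simp
  have hwx : wx = fun s => ((1/2) * ((y - y₀ - u*t) + (x - x₀)*c))*Real.sin (2*B*s)
      - ((1/2) * ((x - x₀) - (y - y₀ - u*t)*c))*Real.cos (2*B*s)
      + ((1/2) * ((x + x₀) - (y - y₀ - u*t)*c)) := by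
    funext s
    show (1/2) * ((y - y₀ - u*t) + (x - x₀)*c) * Real.sin (2*B*s)
      - (1/2) * ((x - x₀) - (y - y₀ - u*t)*c) * Real.cos (2*B*s)
      + (1/2) * ((x + x₀) - (y - y₀ - u*t)*c) = _
    ring
  have hwy : wy = fun s => -((1/2) * ((x - x₀) - (y - y₀ - u*t)*c))*Real.sin (2*B*s)
      - ((1/2) * ((y - y₀ - u*t) + (x - x₀)*c))*Real.cos (2*B*s)
      + ((1/2) * ((y + y₀ - u*t) + (x - x₀)*c)) + u*s := by
    funext s
    show -(1/2) * ((x - x₀) - (y - y₀ - u*t)*c) * Real.sin (2*B*s)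
      - (1/2) * ((y - y₀ - u*t) + (x - x₀)*c) * Real.cos (2*B*s)
      + (1/2) * ((y + y₀ - u*t) + (x - x₀)*c) + u*s = _
    ring
  rw [hwx, hwy, action_eval B F u _ _ _ _ t hF]
  have h2t : (2:ℝ)*B*t = 2*(B*t) := by ring
  rw [h2t, Real.sin_two_mul, Real.cos_two_mul]
  simp only [u, c, Real.cot_eq_cos_div_sin]
  have hpy : Real.sin (B*t)^2 + Real.cos (B*t)^2 = 1 := Real.sin_sq_add_cos_sq _
  field_simp
  linear_combination (8*B^3*x^2*(Real.sin (B*t))*(Real.cos (B*t))^3 - 16*B^3*x*x₀*(Real.sin (B*t))*(Real.cos (B*t))^3 + 8*B^3*x₀^2*(Real.sin (B*t))*(Real.cos (B*t))^3 - 8*B^3*y^2*(Real.sin (B*t))*(Real.cos (B*t))^3 + 16*B^3*y*y₀*(Real.sin (B*t))*(Real.cos (B*t))^3 + 16*F*t*B^2*y*(Real.sin (B*t))*(Real.cos (B*t))^3 - 8*B^3*y₀^2*(Real.sin (B*t))*(Real.cos (B*t))^3 - 16*F*t*B^2*y₀*(Real.sin (B*t))*(Real.cos (B*t))^3 - 8*F^2*t^2*B*(Real.sin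 (B*t))*(Real.cos (B*t))^3 - 8*B^3*x*y*(Real.cos (B*t))^2 + 8*B^3*x₀*y*(Real.cos (B*t))^2 + 8*B^3*x*y₀*(Real.cos (B*t))^2 - 8*B^3*x₀*y₀*(Real.cos (B*t))^2 + 8*F*t*B^2*x*(Real.cos (B*t))^2 - 8*F*t*B^2*x₀*(Real.cos (B*t))^2 + 16*B^3*x*y*(Real.sin (B*t))^2*(Real.cos (B*t))^2 - 16*B^3*x₀*y*(Real.sin (B*t))^2*(Real.cos (B*t))^2 - 16*B^3*x*y₀*(Real.sin (B*t))^2*(Real.cos (B*t))^2 + 16*B^3*x₀*y₀*(Real.sin (B*t))^2*(Real.cos (B*t))^2 - 16*F*t*B^2*x*(Real.sin (B*t))^2*(Real.cos (B*t))^2 + 16*F*t*B^2*x₀*(Real.sin (B*t))^2*(Real.cos (B*t))^2 - 8*F*B*x*(Real.sin (B*t))*(Real.cos (B*t)) + 8*F*B*x₀*(Real.sin (B*t))*(Real.cos (B*t)) + 12*B^3*x^2*(Real.sin (B*t))*(Real.cos (B*t)) - 4*B^3*x₀^2*(Real.sin (B*t))*(Real.cos (B*t)) - 8*B^3*x*x₀*(Real.sin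 (B*t))*(Real.cos (B*t)) - 4*B^3*y^2*(Real.sin (B*t))*(Real.cos (B*t)) + 8*B^3*y*y₀*(Real.sin (B*t))*(Real.cos (B*t)) + 8*F*t*B^2*y*(Real.sin (B*t))*(Real.cos (B*t)) - 4*B^3*y₀^2*(Real.sin (B*t))*(Real.cos (B*t)) - 8*F*t*B^2*y₀*(Real.sin (B*t))*(Real.cos (B*t)) - 4*F^2*t^2*B*(Real.sin (B*t))*(Real.cos (B*t))) * hpy
end

section
/- Let B, F ∈ ℝ with B ≠ 0 and fix (x₀,y₀) ∈ ℝ². Define S(t,x,y) = (F²/(4B²))t + (F/(2B))(y−y₀−(F/B)t) − (B/2)(x+x₀)(y−y₀−(F/B)t) + (B/4)cot(Bt)[(y−y₀−(F/B)t)² + (x−x₀)²] and K(t,x,y) = e^{iS(t,x,y)}/sin(Bt). Then on the open set {(t,x,y) : sin(Bt) ≠ 0}, K satisfies the time-dependent Schrödinger equation i∂_tK = −∂ₓ²K − ∂_y²K − 2iBx·∂_yK + B²x²·K − Fx·K, i.e. i∂_tK = [(−i∂_x)² + (−i∂_y + Bx)² − Fx]K; in other words, the semiclassical propagator formula for the crossed-fields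 Hamiltonian is an exact solution of the Schrödinger equation. -/
set_option maxHeartbeats 2000000
open Complex

private lemma quadDeriv (a b c p : ℝ) :
    HasDerivAt (fun x : ℝ => a + b * x + c * x ^ 2) (b + 2 * c * p) p := by
  have h1 := (hasDerivAt_id p).const_mul b
  have h2 := ((hasDerivAt_id p).pow 2).const_mul c
  have h := ((hasDerivAt_const p a).add h1).add h2
  refine h.congr_deriv ?_
  simp [id]; ring

private lemma cotDeriv {a : ℝ} (h : Real.sin a ≠ 0) :
    HasDerivAt Real.cot (-(1 + Real.cot a ^ 2)) a := by
  have h1 := (Real.hasDerivAt_cos a).div (Real.hasDerivAt_sin a) h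
  have he : (Real.cos / Real.sin) = Real.cot := by
    funext x; rw [Pi.div_apply, Real.cot_eq_cos_div_sin]
  rw [he] at h1
  refine h1.congr_deriv ?_
  rw [Real.cot_eq_cos_div_sin]
  field_simp
  nlinarith [Real.sin_sq_add_cos_sq a]

private lemma expDeriv {f : ℝ → ℝ} {f' p : ℝ} (hf : HasDerivAt f f' p) :
    HasDerivAt (fun x => Complex.exp (Complex.I * (f x : ℝ)))
      (Complex.I * (f' : ℝ) * Complex.exp (Complex.I * (f p : ℝ))) p := by
  have := (hf.ofReal_comp.const_mul Complex.I).cexp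
  convert this using 1; ring

private lemma expDivDeriv {f : ℝ → ℝ} {f' p : ℝ} (hf : HasDerivAt f f' p) (d : ℂ) :
    HasDerivAt (fun x => Complex.exp (Complex.I * (f x : ℝ)) / d)
      (Complex.I * (f' : ℝ) * Complex.exp (Complex.I * (f p : ℝ)) / d) p :=
  (expDeriv hf).div_const d

/-- The semiclassical propagator `K(t,x,y) = e^{iS(t,x,y)}/sin(Bt)` built from the
classical crossed-fields action `S` is an exact solution of the time-dependent
Schrödinger equation `i∂ₜK = (−i∂ₓ)²K + (−i∂_y + Bx)²K − FxK` on the open set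
`{(t,x,y) : sin(Bt) ≠ 0}`. -/
theorem stmt8 (B F x₀ y₀ : ℝ) (hB : B ≠ 0) :
    let S : ℝ → ℝ → ℝ → ℝ := fun t x y =>
      F^2/(4*B^2) * t + F/(2*B) * (y - y₀ - F/B*t)
      - B/2 * (x + x₀) * (y - y₀ - F/B*t)
      + B/4 * Real.cot (B*t) * ((y - y₀ - F/B*t)^2 + (x - x₀)^2)
    let K : ℝ → ℝ → ℝ → ℂ := fun t x y =>
      Complex.exp (Complex.I * (S t x y : ℝ)) / (Real.sin (B*t) : ℂ)
    ∀ t x y : ℝ, Real.sin (B*t) ≠ 0 →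
      Complex.I * deriv (fun τ => K τ x y) t
        = - deriv (fun x' => deriv (fun x'' => K t x'' y) x') x
          - deriv (fun y' => deriv (fun y'' => K t x y'') y') y
          - 2 * Complex.I * (B : ℂ) * (x : ℂ) * deriv (fun y' => K t x y') y
          + (B : ℂ)^2 * (x : ℂ)^2 * K t x y
          - (F : ℂ) * (x : ℂ) * K t x y := by
  intro S K t x y hs
  have hsC : (Real.sin (B*t) : ℂ) ≠ 0 := by exact_mod_cast hs
  set ct := Real.cot (B*t) with hct
  set sn := Real.sin (B*t) with hsn
  set u := y - y₀ - F/B*t with hu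
  -- coefficients for x-quadratic
  set a1 := F^2/(4*B^2)*t + F/(2*B)*u - B/2*x₀*u + B/4*ct*(u^2 + x₀^2) with ha1
  set b1 := -(B/2)*u - B/2*ct*x₀ with hb1
  set c1 := B/4*ct with hc1
  have hgx : (fun x' : ℝ => S t x' y) = (fun x' : ℝ => a1 + b1 * x' + c1 * x' ^ 2) := by
    funext x'; simp only [S, ha1, hb1, hc1, hu, hct]; ring
  -- coefficients for y-quadratic
  set w := y₀ + F/B*t with hw
  set a2 := F^2/(4*B^2)*t - F/(2*B)*w + B/2*(x+x₀)*w + B/4*ct*(w^2 + (x-x₀)^2) with ha2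
  set b2 := F/(2*B) - B/2*(x+x₀) - B/2*ct*w with hb2
  have hgy : (fun y' : ℝ => S t x y') = (fun y' : ℝ => a2 + b2 * y' + c1 * y' ^ 2) := by
    funext y'; simp only [S, ha2, hb2, hc1, hw, hct]; ring
  set E := Complex.exp (Complex.I * (S t x y : ℝ)) with hE
  have hKx : ∀ p : ℝ, HasDerivAt (fun x'' => K t x'' y)
      (Complex.I * ((b1 + 2*c1*p : ℝ) : ℂ)
        * Complex.exp (Complex.I * ((a1 + b1*p + c1*p^2 : ℝ) : ℝ)) / (sn : ℂ)) p := by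
    intro p
    have h := expDivDeriv (quadDeriv a1 b1 c1 p) (sn : ℂ)
    have : (fun x'' : ℝ => K t x'' y)
        = fun x'' : ℝ => Complex.exp (Complex.I * ((a1 + b1*x'' + c1*x''^2 : ℝ) : ℝ)) / (sn : ℂ) := by
      funext x''; simp only [K]; rw [← hsn, congrFun hgx x'']
    rw [this]
    exact h
  have hKy : ∀ p : ℝ, HasDerivAt (fun y'' => K t x y'')
      (Complex.I * ((b2 + 2*c1*p : ℝ) : ℂ)
        * Complex.exp (Complex.I * ((a2 + b2*p + c1*p^2 : ℝ) : ℝ)) / (sn : ℂ)) p := by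
    intro p
    have h := expDivDeriv (quadDeriv a2 b2 c1 p) (sn : ℂ)
    have : (fun y'' : ℝ => K t x y'')
        = fun y'' : ℝ => Complex.exp (Complex.I * ((a2 + b2*y'' + c1*y''^2 : ℝ) : ℝ)) / (sn : ℂ) := by
      funext y''; simp only [K]; rw [← hsn, congrFun hgy y'']
    rw [this]
    exact h
  -- second derivative in x
  have hEx : Complex.exp (Complex.I * ((a1 + b1*x + c1*x^2 : ℝ) : ℝ)) = E := by
    rw [hE, congrFun hgx x]
  have hEy : Complex.exp (Complex.I * ((a2 + b2*y + c1*y^2 : ℝ) : ℝ)) = E := by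
    rw [hE, congrFun hgy y]
  have hDx2 : deriv (fun x' => deriv (fun x'' => K t x'' y) x') x
      = (Complex.I * ((2*c1 : ℝ) : ℂ) + (Complex.I * ((b1 + 2*c1*x : ℝ) : ℂ))^2) * E / (sn : ℂ) := by
    have heq : (fun x' => deriv (fun x'' => K t x'' y) x')
        = fun x' => (Complex.I * ((b1 + 2*c1*x' : ℝ) : ℂ))
            * (Complex.exp (Complex.I * ((a1 + b1*x' + c1*x'^2 : ℝ) : ℝ)) / (sn : ℂ)) := by
      funext p
      rw [(hKx p).deriv]; ring
    rw [heq]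
    have hlin : HasDerivAt (fun x' : ℝ => Complex.I * ((b1 + 2*c1*x' : ℝ) : ℂ))
        (Complex.I * ((2*c1 : ℝ) : ℂ)) x := by
      have h0 : HasDerivAt (fun x' : ℝ => b1 + 2*c1*x') (2*c1) x := by
        simpa using ((hasDerivAt_id x).const_mul (2*c1)).const_add b1
      exact (h0.ofReal_comp).const_mul Complex.I
    have hexp := expDivDeriv (quadDeriv a1 b1 c1 x) (sn : ℂ)
    have h : HasDerivAt (fun x' : ℝ => (Complex.I * ((b1 + 2*c1*x' : ℝ) : ℂ))
        * (Complex.exp (Complex.I * ((a1 + b1*x' + c1*x'^2 : ℝ) : ℝ)) / (sn : ℂ))) _ x := hlin.mul hexp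
    rw [h.deriv, hEx]
    ring
  have hDy2 : deriv (fun y' => deriv (fun y'' => K t x y'') y') y
      = (Complex.I * ((2*c1 : ℝ) : ℂ) + (Complex.I * ((b2 + 2*c1*y : ℝ) : ℂ))^2) * E / (sn : ℂ) := by
    have heq : (fun y' => deriv (fun y'' => K t x y'') y')
        = fun y' => (Complex.I * ((b2 + 2*c1*y' : ℝ) : ℂ))
            * (Complex.exp (Complex.I * ((a2 + b2*y' + c1*y'^2 : ℝ) : ℝ)) / (sn : ℂ)) := by
      funext p
      rw [(hKy p).deriv]; ring
    rw [heq]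
    have hlin : HasDerivAt (fun y' : ℝ => Complex.I * ((b2 + 2*c1*y' : ℝ) : ℂ))
        (Complex.I * ((2*c1 : ℝ) : ℂ)) y := by
      have h0 : HasDerivAt (fun y' : ℝ => b2 + 2*c1*y') (2*c1) y := by
        simpa using ((hasDerivAt_id y).const_mul (2*c1)).const_add b2
      exact (h0.ofReal_comp).const_mul Complex.I
    have hexp := expDivDeriv (quadDeriv a2 b2 c1 y) (sn : ℂ)
    have h : HasDerivAt (fun y' : ℝ => (Complex.I * ((b2 + 2*c1*y' : ℝ) : ℂ))
        * (Complex.exp (Complex.I * ((a2 + b2*y' + c1*y'^2 : ℝ) : ℝ)) / (sn : ℂ))) _ y := hlin.mul hexp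
    rw [h.deriv, hEy]
    ring
  have hDy1 : deriv (fun y' => K t x y') y
      = Complex.I * ((b2 + 2*c1*y : ℝ) : ℂ) * E / (sn : ℂ) := by
    rw [(hKy y).deriv, hEy]
  -- time derivative
  set St := F^2/(4*B^2) + F/(2*B)*(-(F/B)) + B/2*(x+x₀)*(F/B)
      + B/4*((-B*(1+ct^2))*(u^2 + (x-x₀)^2) + ct*(2*u*(-(F/B)))) with hSt
  have hgt : HasDerivAt (fun τ : ℝ => S τ x y) St t := by
    have hlin : HasDerivAt (fun τ : ℝ => y - y₀ - F/B*τ) (-(F/B)) t := by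
      simpa using ((hasDerivAt_id t).const_mul (F/B)).const_sub (y - y₀)
    have hcot : HasDerivAt (fun τ : ℝ => Real.cot (B*τ)) (-B*(1+ct^2)) t := by
      have hc := (cotDeriv hs).comp t ((hasDerivAt_id t).const_mul B)
      refine hc.congr_deriv ?_
      simp only [hct, id]; ring
    have hq : HasDerivAt (fun τ : ℝ => (y - y₀ - F/B*τ)^2 + (x - x₀)^2)
        (2*u*(-(F/B))) t := by
      have := (hlin.pow 2).add_const ((x - x₀)^2)
      refine this.congr_deriv ?_
      simp only [hu]; ring
    have h1 := (hasDerivAt_id t).const_mul (F^2/(4*B^2))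
    have h2 := hlin.const_mul (F/(2*B))
    have h3 := hlin.const_mul (B/2*(x+x₀))
    have h4 := (hcot.mul hq).const_mul (B/4)
    have h := ((h1.add h2).sub h3).add h4
    have hfun : (fun τ : ℝ => S τ x y)
        = fun τ : ℝ => (F^2/(4*B^2) * τ + F/(2*B) * (y - y₀ - F/B*τ)
          - B/2*(x+x₀) * (y - y₀ - F/B*τ))
          + B/4 * (Real.cot (B*τ) * ((y - y₀ - F/B*τ)^2 + (x - x₀)^2)) := by
      funext τ; simp only [S]; ring
    rw [hfun]
    refine h.congr_deriv ?_
    simp only [hSt, hu, id]; ring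
  have hDt : deriv (fun τ => K τ x y) t
      = (Complex.I * (St : ℝ) * E * (sn : ℂ) - E * ((B * Real.cos (B*t) : ℝ) : ℂ))
        / ((sn : ℂ))^2 := by
    have hN := expDeriv hgt
    have hD : HasDerivAt (fun τ : ℝ => ((Real.sin (B*τ) : ℝ) : ℂ))
        ((B * Real.cos (B*t) : ℝ) : ℂ) t := by
      have h0 : HasDerivAt (fun τ : ℝ => Real.sin (B*τ)) (B * Real.cos (B*t)) t := by
        have := (Real.hasDerivAt_sin (B*t)).comp t ((hasDerivAt_id t).const_mul B)
        refine this.congr_deriv ?_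
        simp [id]; ring
      exact h0.ofReal_comp
    have h : HasDerivAt (fun τ => Complex.exp (Complex.I * ((S τ x y : ℝ) : ℝ)) / ((Real.sin (B*τ) : ℝ) : ℂ)) _ t :=
      hN.div hD hsC
    have : (fun τ => K τ x y)
        = fun τ => Complex.exp (Complex.I * ((S τ x y : ℝ) : ℝ)) / ((Real.sin (B*τ) : ℝ) : ℂ) := by
      funext τ; simp only [K]
    rw [this, h.deriv, ← hE, ← hsn]
  -- cos = ct * sn
  have hcos : Real.cos (B*t) = ct * sn := by
    rw [hct, hsn, Real.cot_eq_cos_div_sin]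
    field_simp
    exact (mul_div_cancel_right₀ _ hs).symm
  -- assemble
  rw [hDt, hDx2, hDy2, hDy1]
  have hKval : K t x y = E / (sn : ℂ) := by simp only [K, ← hE, ← hsn]
  rw [hKval]
  set D1 := b1 + 2*c1*x with hD1
  set D2 := b2 + 2*c1*y with hD2
  have hLHS : Complex.I * ((Complex.I * (St : ℝ) * E * (sn : ℂ)
        - E * ((B * Real.cos (B*t) : ℝ) : ℂ)) / ((sn : ℂ))^2)
      = (((-St : ℝ) : ℂ) + Complex.I * (((-(B*ct)) : ℝ) : ℂ)) * (E / (sn : ℂ)) := by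
    rw [hcos]
    push_cast
    rw [← mul_div_assoc, ← mul_div_assoc,
        div_eq_div_iff (pow_ne_zero 2 hsC) hsC]
    linear_combination ((St : ℂ) * E * ((sn : ℂ))^2) * Complex.I_sq
  have hRHS : -((Complex.I * ((2*c1 : ℝ) : ℂ) + (Complex.I * ((D1 : ℝ) : ℂ))^2) * E / (sn : ℂ))
        - ((Complex.I * ((2*c1 : ℝ) : ℂ) + (Complex.I * ((D2 : ℝ) : ℂ))^2) * E / (sn : ℂ))
        - 2 * Complex.I * (B : ℂ) * (x : ℂ) * (Complex.I * ((D2 : ℝ) : ℂ) * E / (sn : ℂ))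
        + (B : ℂ)^2 * (x : ℂ)^2 * (E / (sn : ℂ)) - (F : ℂ) * (x : ℂ) * (E / (sn : ℂ))
      = (((D1^2 + D2^2 + 2*B*x*D2 + B^2*x^2 - F*x : ℝ) : ℂ)
          + Complex.I * (((-(4*c1)) : ℝ) : ℂ)) * (E / (sn : ℂ)) := by
    push_cast
    linear_combination (-(((D1:ℂ))^2 + ((D2:ℂ))^2 + 2*(B:ℂ)*(x:ℂ)*(D2:ℂ)) * E / ((sn : ℂ))) * Complex.I_sq
  rw [hLHS, hRHS]
  have hre : -St = D1^2 + D2^2 + 2*B*x*D2 + B^2*x^2 - F*x := by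
    simp only [hD1, hD2, hSt, hb1, hb2, hc1, hu, hw]
    field_simp
    ring
  have him : -(B*ct) = -(4*c1) := by rw [hc1]; ring
  rw [hre, him]
end

section
/- Let B > 0, F ∈ ℝ, u = F/B, let γ < δ < 0, let f, g : ℝ² → ℂ be bounded measurable functions with compact support, and for each t > 0 let Φ_t : ℝ⁴ → ℝ be a measurable (real-valued) phase function. For t > 0 with sin(Bt) ≠ 0 define the kernel K_t(x,y,x₀,y₀) = (2π)⁻¹√(B/2)·e^{γt}·f(x,y)·g(x₀,y₀)·e^{iΦ_t(x,y,x₀,y₀)}·(sin(Bt))⁻¹·[γ + B·cot(Bt) + (i/4)(u² − 2F(x+x₀) − (B²/sin²(Bt))((x−x₀)² + (y−y₀+ut)²) + 2F·cot(Bt)·(y−y₀+ut))]. Then there exists a constant C > 0, depending only on f, g, F, B, γ, δ, such that for every t > 0 with sin(Bt) ≠ 0 the Hilbert–Schmidt (L²) norm of K_t satisfies (∫_{ℝ⁴}|K_t(x,y,x₀,y₀)|² dx dy dx₀ dy₀)^{1/2} ≤ C·e^{δt}/|sin(Bt)|³. -/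
open MeasureTheory

set_option maxHeartbeats 1000000

private lemma texp_le' (ε t : ℝ) (hε : 0 < ε) (ht : 0 ≤ t) :
    t * Real.exp (-(ε * t)) ≤ 1 / ε := by
  have h1 : ε * t ≤ Real.exp (ε * t) :=
    le_trans (by linarith) (Real.add_one_le_exp (ε * t))
  have he : (0:ℝ) < Real.exp (ε * t) := Real.exp_pos _
  rw [Real.exp_neg, le_div_iff₀ hε]
  calc t * (Real.exp (ε*t))⁻¹ * ε = (ε * t) * (Real.exp (ε*t))⁻¹ := by ring
    _ ≤ Real.exp (ε*t) * (Real.exp (ε*t))⁻¹ := by gcongr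
    _ = 1 := mul_inv_cancel₀ (ne_of_gt he)

private lemma t2exp_le' (ε t : ℝ) (hε : 0 < ε) (ht : 0 ≤ t) :
    t^2 * Real.exp (-(ε * t)) ≤ 4 / ε^2 := by
  have h := texp_le' (ε/2) t (by linarith) ht
  have hE : (0:ℝ) ≤ Real.exp (-(ε/2 * t)) := (Real.exp_pos _).le
  have h2 : Real.exp (-(ε * t)) = Real.exp (-(ε/2 * t)) * Real.exp (-(ε/2 * t)) := by
    rw [← Real.exp_add]; ring_nf
  have h3 : t * Real.exp (-(ε/2 * t)) ≤ 2 / ε := by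
    have he : (1:ℝ) / (ε/2) = 2/ε := by field_simp
    linarith [he ▸ h]
  have h4 : 0 ≤ t * Real.exp (-(ε/2*t)) := mul_nonneg ht hE
  have h5 : (t * Real.exp (-(ε/2*t))) * (t * Real.exp (-(ε/2*t))) ≤ (2/ε) * (2/ε) :=
    mul_le_mul h3 h3 h4 (by positivity)
  have h6 : (2/ε) * (2/ε) = 4/ε^2 := by field_simp; ring
  calc t^2 * Real.exp (-(ε*t)) = (t * Real.exp (-(ε/2*t))) * (t * Real.exp (-(ε/2*t))) := by
        rw [h2]; ring
    _ ≤ (2/ε) * (2/ε) := h5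
    _ = 4/ε^2 := h6

private lemma exppoly (γ δ t a0 a1 a2 : ℝ) (hγδ : γ < δ) (ht : 0 ≤ t)
    (h0 : 0 ≤ a0) (h1 : 0 ≤ a1) (h2 : 0 ≤ a2) :
    Real.exp (γ*t) * (a0 + a1*t + a2*t^2)
      ≤ (a0 + a1*(1/(δ-γ)) + a2*(4/(δ-γ)^2)) * Real.exp (δ*t) := by
  have hε : 0 < δ - γ := by linarith
  have e1 : Real.exp (γ*t) = Real.exp (δ*t) * Real.exp (-((δ-γ)*t)) := by
    rw [← Real.exp_add]; ring_nf
  have k1 := texp_le' (δ-γ) t hε ht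
  have k2 := t2exp_le' (δ-γ) t hε ht
  have hE : 0 ≤ Real.exp (-((δ-γ)*t)) := (Real.exp_pos _).le
  have hE1 : Real.exp (-((δ-γ)*t)) ≤ 1 := by
    rw [Real.exp_le_one_iff]
    nlinarith
  have hD : (0:ℝ) < Real.exp (δ*t) := Real.exp_pos _
  have inner : Real.exp (-((δ-γ)*t)) * (a0 + a1*t + a2*t^2)
      ≤ a0 + a1*(1/(δ-γ)) + a2*(4/(δ-γ)^2) := by
    have i0 : Real.exp (-((δ-γ)*t)) * a0 ≤ a0 := by nlinarith
    have i1 : Real.exp (-((δ-γ)*t)) * (a1*t) ≤ a1*(1/(δ-γ)) := by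
      have := mul_le_mul_of_nonneg_left k1 h1
      nlinarith
    have i2 : Real.exp (-((δ-γ)*t)) * (a2*t^2) ≤ a2*(4/(δ-γ)^2) := by
      have := mul_le_mul_of_nonneg_left k2 h2
      nlinarith
    nlinarith
  calc Real.exp (γ*t) * (a0 + a1*t + a2*t^2)
      = Real.exp (δ*t) * (Real.exp (-((δ-γ)*t)) * (a0 + a1*t + a2*t^2)) := by rw [e1]; ring
    _ ≤ Real.exp (δ*t) * (a0 + a1*(1/(δ-γ)) + a2*(4/(δ-γ)^2)) :=
        mul_le_mul_of_nonneg_left inner hD.le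
    _ = (a0 + a1*(1/(δ-γ)) + a2*(4/(δ-γ)^2)) * Real.exp (δ*t) := by ring

private lemma brac_bound (B F γ t R x y x0 y0 : ℝ) (ht : 0 < t)
    (hs : Real.sin (B*t) ≠ 0)
    (hx : |x| ≤ R) (hy : |y| ≤ R) (hx0 : |x0| ≤ R) (hy0 : |y0| ≤ R) :
    ‖((γ : ℂ) + ((B * Real.cot (B*t) : ℝ) : ℂ)
        + (Complex.I/4) * ((((F/B)^2 : ℝ) : ℂ) - ((2*F*(x + x0) : ℝ) : ℂ)
            - (((B^2/(Real.sin (B*t))^2) : ℝ) : ℂ)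
                * (((x - x0)^2 + (y - y0 + (F/B)*t)^2 : ℝ) : ℂ)
            + ((2*F*Real.cot (B*t)*(y - y0 + (F/B)*t) : ℝ) : ℂ)))‖
      ≤ ((|γ| + |B| + ((F/B)^2 + 8* |F| * |R| + 12*B^2*R^2)/4)
          + (|F| * |F/B|/2)*t + (B^2*(F/B)^2/2)*t^2) / |Real.sin (B*t)|^2 := by
  have hsa0 : 0 < |Real.sin (B*t)| := abs_pos.2 hs
  have hsa1 : |Real.sin (B*t)| ≤ 1 := abs_le.2 ⟨Real.neg_one_le_sin _, Real.sin_le_one _⟩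
  obtain ⟨hx1, hx2⟩ := abs_le.1 hx
  obtain ⟨hy1, hy2⟩ := abs_le.1 hy
  obtain ⟨hx01, hx02⟩ := abs_le.1 hx0
  obtain ⟨hy01, hy02⟩ := abs_le.1 hy0
  have hRa : R ≤ |R| := le_abs_self R
  have hcot : |Real.cot (B*t)| ≤ 1/|Real.sin (B*t)| := by
    rw [Real.cot_eq_cos_div_sin, abs_div]
    exact (div_le_div_iff_of_pos_right hsa0).2 (Real.abs_cos_le_one _)
  -- cast step
  have e1 : ((γ : ℂ) + ((B * Real.cot (B*t) : ℝ) : ℂ)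
        + (Complex.I/4) * ((((F/B)^2 : ℝ) : ℂ) - ((2*F*(x + x0) : ℝ) : ℂ)
            - (((B^2/(Real.sin (B*t))^2) : ℝ) : ℂ)
                * (((x - x0)^2 + (y - y0 + (F/B)*t)^2 : ℝ) : ℂ)
            + ((2*F*Real.cot (B*t)*(y - y0 + (F/B)*t) : ℝ) : ℂ)))
      = ((γ + B * Real.cot (B*t) : ℝ) : ℂ)
        + (Complex.I/4) * (((( (F/B)^2 - 2*F*(x + x0)
            - B^2/(Real.sin (B*t))^2 * ((x - x0)^2 + (y - y0 + (F/B)*t)^2)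
            + 2*F*Real.cot (B*t)*(y - y0 + (F/B)*t)) : ℝ)) : ℂ) := by
    push_cast; ring
  rw [e1]
  have e2 : ‖((γ + B * Real.cot (B*t) : ℝ) : ℂ)
        + (Complex.I/4) * (((( (F/B)^2 - 2*F*(x + x0)
            - B^2/(Real.sin (B*t))^2 * ((x - x0)^2 + (y - y0 + (F/B)*t)^2)
            + 2*F*Real.cot (B*t)*(y - y0 + (F/B)*t)) : ℝ)) : ℂ)‖
      ≤ |γ + B * Real.cot (B*t)|
        + |(F/B)^2 - 2*F*(x + x0)
            - B^2/(Real.sin (B*t))^2 * ((x - x0)^2 + (y - y0 + (F/B)*t)^2)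
            + 2*F*Real.cot (B*t)*(y - y0 + (F/B)*t)|/4 := by
    refine (norm_add_le _ _).trans ?_
    have n1 : ∀ r : ℝ, ‖(r : ℂ)‖ = |r| := fun r => by
      rw [Complex.norm_real, Real.norm_eq_abs]
    have n2 : ‖(Complex.I/4 : ℂ)‖ = 1/4 := by
      rw [norm_div, Complex.norm_I]
      norm_num
    rw [n1, norm_mul, n2, n1]
    ring_nf
    linarith
  refine e2.trans ?_
  -- triangle helper
  have tri : ∀ p q : ℝ, |p - q| ≤ |p| + |q| := fun p q => by
    rw [sub_eq_add_neg]
    exact le_of_le_of_eq (abs_add_le _ _) (by rw [abs_neg])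
  -- bounds on pieces
  have hE : (x-x0)^2 + (y-y0+(F/B)*t)^2 ≤ 12*R^2 + 2*(F/B)^2*t^2 := by
    have h1 : (x-x0)^2 ≤ 4*R^2 := by nlinarith
    have h2 : (y-y0)^2 ≤ 4*R^2 := by nlinarith
    have h3 : (y-y0+(F/B)*t)^2 ≤ 2*(y-y0)^2 + 2*((F/B)*t)^2 := by
      nlinarith [sq_nonneg (y-y0-(F/B)*t)]
    have h4 : 2*((F/B)*t)^2 = 2*(F/B)^2*t^2 := by ring
    linarith
  have hDE : B^2/(Real.sin (B*t))^2 * ((x-x0)^2 + (y-y0+(F/B)*t)^2)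
      ≤ (12*B^2*R^2 + 2*B^2*(F/B)^2*t^2)/|Real.sin (B*t)|^2 := by
    rw [← sq_abs (Real.sin (B*t)), div_mul_eq_mul_div]
    apply (div_le_div_iff_of_pos_right (pow_pos hsa0 2)).2
    nlinarith [mul_le_mul_of_nonneg_left hE (sq_nonneg B)]
  have hA : |2*F*(x+x0)| ≤ 4* |F| * |R| := by
    rw [abs_mul, abs_mul, abs_two]
    have h1 : |x+x0| ≤ 2* |R| := abs_le.2 ⟨by linarith, by linarith⟩
    nlinarith [abs_nonneg F, abs_nonneg (x+x0)]
  have hw : |y - y0 + (F/B)*t| ≤ 2* |R| + |F/B| *t := by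
    have h1 : |(F/B)*t| = |F/B| *t := by rw [abs_mul, abs_of_pos ht]
    have h2 := le_abs_self ((F/B)*t)
    have h3 := neg_abs_le ((F/B)*t)
    rw [h1] at h2 h3
    exact abs_le.2 ⟨by linarith, by linarith⟩
  have hG : |2*F*Real.cot (B*t)*(y - y0 + (F/B)*t)|
      ≤ 2* |F| *(1/|Real.sin (B*t)|)*(2* |R| + |F/B| *t) := by
    rw [abs_mul, abs_mul, abs_mul, abs_two]
    calc 2* |F| * |Real.cot (B*t)| * |y - y0 + (F/B)*t|
        ≤ 2* |F| *(1/|Real.sin (B*t)|)* |y - y0 + (F/B)*t| := by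
          apply mul_le_mul_of_nonneg_right
            (mul_le_mul_of_nonneg_left hcot (by positivity)) (abs_nonneg _)
      _ ≤ 2* |F| *(1/|Real.sin (B*t)|)*(2* |R| + |F/B| *t) := by
          apply mul_le_mul_of_nonneg_left hw (by positivity)
  have hXsplit : |(F/B)^2 - 2*F*(x + x0)
            - B^2/(Real.sin (B*t))^2 * ((x - x0)^2 + (y - y0 + (F/B)*t)^2)
            + 2*F*Real.cot (B*t)*(y - y0 + (F/B)*t)|
      ≤ (F/B)^2 + |2*F*(x+x0)|
        + B^2/(Real.sin (B*t))^2 * ((x-x0)^2 + (y-y0+(F/B)*t)^2)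
        + |2*F*Real.cot (B*t)*(y - y0 + (F/B)*t)| := by
    have t1 := abs_add_le ((F/B)^2 - 2*F*(x + x0)
        - B^2/(Real.sin (B*t))^2 * ((x - x0)^2 + (y - y0 + (F/B)*t)^2))
        (2*F*Real.cot (B*t)*(y - y0 + (F/B)*t))
    have t2 := tri ((F/B)^2 - 2*F*(x + x0))
        (B^2/(Real.sin (B*t))^2 * ((x - x0)^2 + (y - y0 + (F/B)*t)^2))
    have t3 := tri ((F/B)^2) (2*F*(x + x0))
    have t4 : |(F/B)^2| = (F/B)^2 := abs_of_nonneg (sq_nonneg _)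
    have t5 : |B^2/(Real.sin (B*t))^2 * ((x - x0)^2 + (y - y0 + (F/B)*t)^2)|
        = B^2/(Real.sin (B*t))^2 * ((x - x0)^2 + (y - y0 + (F/B)*t)^2) :=
      abs_of_nonneg (by positivity)
    linarith
  have hnum : (0:ℝ) ≤ 4* |F| * |R| + 2* |F| * |F/B| *t := by
    have := mul_nonneg (mul_nonneg (by norm_num : (0:ℝ) ≤ 2) (abs_nonneg F))
      (mul_nonneg (abs_nonneg (F/B)) ht.le)
    nlinarith [mul_nonneg (abs_nonneg F) (abs_nonneg R)]
  have hXb : |(F/B)^2 - 2*F*(x + x0)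
            - B^2/(Real.sin (B*t))^2 * ((x - x0)^2 + (y - y0 + (F/B)*t)^2)
            + 2*F*Real.cot (B*t)*(y - y0 + (F/B)*t)|
      ≤ ((F/B)^2 + 8* |F| * |R| + 12*B^2*R^2 + 2* |F| * |F/B| *t
          + 2*B^2*(F/B)^2*t^2)/|Real.sin (B*t)|^2 := by
    have hsq1 : |Real.sin (B*t)|^2 ≤ 1 := pow_le_one₀ hsa0.le hsa1
    have h6 : (F/B)^2 ≤ (F/B)^2/|Real.sin (B*t)|^2 := by
      rw [le_div_iff₀ (pow_pos hsa0 2)]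
      linarith [mul_le_mul_of_nonneg_left hsq1 (sq_nonneg (F/B))]
    have h7 : 4* |F| * |R| ≤ 4* |F| * |R|/|Real.sin (B*t)|^2 := by
      rw [le_div_iff₀ (pow_pos hsa0 2)]
      linarith [mul_le_mul_of_nonneg_left hsq1
        (mul_nonneg (mul_nonneg (by norm_num : (0:ℝ) ≤ 4) (abs_nonneg F)) (abs_nonneg R))]
    have h8 : 2* |F| *(1/|Real.sin (B*t)|)*(2* |R| + |F/B| *t)
        ≤ (4* |F| * |R| + 2* |F| * |F/B| *t)/|Real.sin (B*t)|^2 := by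
      have e3 : 2* |F| *(1/|Real.sin (B*t)|)*(2* |R| + |F/B| *t)
          = (4* |F| * |R| + 2* |F| * |F/B| *t)/|Real.sin (B*t)| := by
        field_simp; ring
      rw [e3, div_le_div_iff₀ hsa0 (pow_pos hsa0 2)]
      nlinarith [mul_nonneg (mul_nonneg hnum hsa0.le) (sub_nonneg.2 hsa1), hnum, hsa0.le]
    have h9 : (F/B)^2/|Real.sin (B*t)|^2 + 4* |F| * |R|/|Real.sin (B*t)|^2
        + (12*B^2*R^2 + 2*B^2*(F/B)^2*t^2)/|Real.sin (B*t)|^2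
        + (4* |F| * |R| + 2* |F| * |F/B| *t)/|Real.sin (B*t)|^2
        = ((F/B)^2 + 8* |F| * |R| + 12*B^2*R^2 + 2* |F| * |F/B| *t
            + 2*B^2*(F/B)^2*t^2)/|Real.sin (B*t)|^2 := by ring
    linarith [hXsplit, hA, hDE, hG]
  have h5 : |γ + B*Real.cot (B*t)| ≤ |γ| + |B| *(1/|Real.sin (B*t)|) := by
    refine (abs_add_le _ _).trans ?_
    rw [abs_mul]
    have := mul_le_mul_of_nonneg_left hcot (abs_nonneg B)
    linarith
  have hsq1' : |Real.sin (B*t)|^2 ≤ 1 := pow_le_one₀ hsa0.le hsa1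
  have expand : ∀ sa : ℝ, sa ≠ 0 → (|γ| + |B| * (1/sa))
      + (((F/B)^2 + 8* |F| * |R| + 12*B^2*R^2 + 2* |F| * |F/B| * t
          + 2*B^2*(F/B)^2*t^2)/sa^2)/4
      = (|γ| * sa^2 + |B| * sa
          + ((F/B)^2 + 8* |F| * |R| + 12*B^2*R^2 + 2* |F| * |F/B| * t
              + 2*B^2*(F/B)^2*t^2)/4)/sa^2 := by
    intro sa hsa
    field_simp
  have step1 : |γ + B*Real.cot (B*t)|
      + |(F/B)^2 - 2*F*(x + x0)
          - B^2/(Real.sin (B*t))^2 * ((x - x0)^2 + (y - y0 + (F/B)*t)^2)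
          + 2*F*Real.cot (B*t)*(y - y0 + (F/B)*t)|/4
      ≤ (|γ| + |B| * (1/|Real.sin (B*t)|))
        + (((F/B)^2 + 8* |F| * |R| + 12*B^2*R^2 + 2* |F| * |F/B| * t
            + 2*B^2*(F/B)^2*t^2)/|Real.sin (B*t)|^2)/4 := by linarith
  refine step1.trans ?_
  rw [expand _ hsa0.ne']
  apply (div_le_div_iff_of_pos_right (pow_pos hsa0 2)).2
  have i1 : |γ| * |Real.sin (B*t)|^2 ≤ |γ| := by
    linarith [mul_le_mul_of_nonneg_left hsq1' (abs_nonneg γ)]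
  have i2 : |B| * |Real.sin (B*t)| ≤ |B| := by
    linarith [mul_le_mul_of_nonneg_left hsa1 (abs_nonneg B)]
  linarith
/-- Hilbert–Schmidt bound on the kernel of `G'(t)`: for bounded measurable compactly
supported `f, g` and an arbitrary measurable real phase `Φ_t`, the `L²(ℝ⁴)` norm of the
kernel `K_t` is bounded by `C·e^{δt}/|sin(Bt)|³`, with `C` depending only on
`f, g, F, B, γ, δ` (and not on `t`). -/
theorem stmt9 (B F γ δ : ℝ) (hB : 0 < B) (hγδ : γ < δ) (hδ : δ < 0)
    (f g : ℝ × ℝ → ℂ) (Φ : ℝ → ℝ × ℝ × ℝ × ℝ → ℝ)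
    (hf : Measurable f) (hg : Measurable g)
    (hfb : ∃ M, ∀ p, ‖f p‖ ≤ M) (hgb : ∃ M, ∀ p, ‖g p‖ ≤ M)
    (hfs : HasCompactSupport f) (hgs : HasCompactSupport g)
    (hΦ : ∀ t > 0, Measurable (Φ t)) :
    ∃ C > 0, ∀ t > 0, Real.sin (B*t) ≠ 0 →
      Real.sqrt (∫ q : ℝ × ℝ × ℝ × ℝ,
        ‖((2*Real.pi)⁻¹ : ℝ) * (Real.sqrt (B/2) : ℝ) * (Real.exp (γ*t) : ℝ)
            * f (q.1, q.2.1) * g (q.2.2.1, q.2.2.2)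
            * Complex.exp (Complex.I * (Φ t q : ℝ))
            * ((Real.sin (B*t))⁻¹ : ℝ)
            * ((γ : ℂ) + (B * Real.cot (B*t) : ℝ)
                + (Complex.I/4) * (((F/B)^2 : ℝ) - (2*F*(q.1 + q.2.2.1) : ℝ)
                    - ((B^2/(Real.sin (B*t))^2) : ℝ)
                        * (((q.1 - q.2.2.1)^2 + (q.2.1 - q.2.2.2 + (F/B)*t)^2 : ℝ))
                    + (2*F*Real.cot (B*t)*(q.2.1 - q.2.2.2 + (F/B)*t) : ℝ)))‖^2)
        ≤ C * Real.exp (δ*t) / |Real.sin (B*t)|^3 := by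
  obtain ⟨Mf, hMf⟩ := hfb
  obtain ⟨Mg, hMg⟩ := hgb
  obtain ⟨Rf, hRf0, hRf⟩ := (IsCompact.isBounded hfs).subset_closedBall_lt 0 0
  obtain ⟨Rg, hRg0, hRg⟩ := (IsCompact.isBounded hgs).subset_closedBall_lt 0 0
  set R : ℝ := max Rf Rg with hRdef
  have hR0 : 0 < R := lt_max_of_lt_left hRf0
  set V : ℝ := (volume (Metric.closedBall (0 : ℝ × ℝ × ℝ × ℝ) R)).toReal with hVdef
  have hV0 : 0 ≤ V := ENNReal.toReal_nonneg
  have hε : 0 < δ - γ := by linarith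
  set a0 : ℝ := |γ| + |B| + ((F/B)^2 + 8 * |F| * |R| + 12*B^2*R^2)/4 with ha0def
  set a1 : ℝ := |F| * |F/B| / 2 with ha1def
  set a2 : ℝ := B^2*(F/B)^2/2 with ha2def
  set c1 : ℝ := (2*Real.pi)⁻¹ * Real.sqrt (B/2) * |Mf| * |Mg| with hc1def
  set C0 : ℝ := c1 * (a0 + a1*(1/(δ-γ)) + a2*(4/(δ-γ)^2)) with hC0def
  have ha0 : 0 ≤ a0 := by rw [ha0def]; positivity
  have ha1' : 0 ≤ a1 := by rw [ha1def]; positivity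
  have ha2' : 0 ≤ a2 := by rw [ha2def]; positivity
  have hc1 : 0 ≤ c1 := by rw [hc1def]; positivity
  have hC00 : 0 ≤ C0 := by
    apply mul_nonneg hc1
    have i1 : 0 ≤ a1*(1/(δ-γ)) := mul_nonneg ha1' (by positivity)
    have i2 : 0 ≤ a2*(4/(δ-γ)^2) := mul_nonneg ha2' (by positivity)
    exact add_nonneg (add_nonneg ha0 i1) i2
  have hCpos : 0 < (Real.sqrt V + 1) * (C0 + 1) := by
    nlinarith [Real.sqrt_nonneg V, mul_nonneg (Real.sqrt_nonneg V) hC00]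
  refine ⟨(Real.sqrt V + 1) * (C0 + 1), hCpos, ?_⟩
  intro t ht hsin
  have hsa0 : 0 < |Real.sin (B*t)| := abs_pos.2 hsin
  have hsa1 : |Real.sin (B*t)| ≤ 1 := abs_le.2 ⟨Real.neg_one_le_sin _, Real.sin_le_one _⟩
  set cE : ℝ := C0 * Real.exp (δ*t) / |Real.sin (B*t)|^3 with hcEdef
  have hcE0 : 0 ≤ cE := by
    rw [hcEdef]
    exact div_nonneg (mul_nonneg hC00 (Real.exp_pos _).le) (by positivity)
  have hmono : (∫ q : ℝ × ℝ × ℝ × ℝ,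
        ‖((2*Real.pi)⁻¹ : ℝ) * (Real.sqrt (B/2) : ℝ) * (Real.exp (γ*t) : ℝ)
            * f (q.1, q.2.1) * g (q.2.2.1, q.2.2.2)
            * Complex.exp (Complex.I * (Φ t q : ℝ))
            * ((Real.sin (B*t))⁻¹ : ℝ)
            * ((γ : ℂ) + (B * Real.cot (B*t) : ℝ)
                + (Complex.I/4) * (((F/B)^2 : ℝ) - (2*F*(q.1 + q.2.2.1) : ℝ)
                    - ((B^2/(Real.sin (B*t))^2) : ℝ)
                        * (((q.1 - q.2.2.1)^2 + (q.2.1 - q.2.2.2 + (F/B)*t)^2 : ℝ))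
                    + (2*F*Real.cot (B*t)*(q.2.1 - q.2.2.2 + (F/B)*t) : ℝ)))‖^2)
      ≤ V * cE^2 := by
    have hind : Integrable ((Metric.closedBall (0 : ℝ × ℝ × ℝ × ℝ) R).indicator
        (fun _ => cE^2)) volume := by
      rw [integrable_indicator_iff measurableSet_closedBall]
      exact integrableOn_const measure_closedBall_lt_top.ne
    refine le_trans (integral_mono_of_nonneg (Filter.Eventually.of_forall fun q => by positivity)
        hind (Filter.Eventually.of_forall ?_)) ?_
    · -- pointwise bound
      intro q
      obtain ⟨x, y, x0, y0⟩ := q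
      dsimp only
      by_cases hq1 : f (x, y) = 0
      · simp only [hq1, mul_zero, zero_mul, norm_zero]
        rw [zero_pow (by norm_num)]
        exact Set.indicator_nonneg (fun _ _ => by positivity) _
      by_cases hq2 : g (x0, y0) = 0
      · simp only [hq2, mul_zero, zero_mul, norm_zero]
        rw [zero_pow (by norm_num)]
        exact Set.indicator_nonneg (fun _ _ => by positivity) _
      have hnf : ‖((x, y) : ℝ × ℝ)‖ ≤ Rf :=
        mem_closedBall_zero_iff.1 (hRf (subset_tsupport f (Function.mem_support.mpr hq1)))
      have hng : ‖((x0, y0) : ℝ × ℝ)‖ ≤ Rg :=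
        mem_closedBall_zero_iff.1 (hRg (subset_tsupport g (Function.mem_support.mpr hq2)))
      have hx : |x| ≤ R := by
        calc |x| = ‖x‖ := (Real.norm_eq_abs x).symm
          _ ≤ ‖((x, y) : ℝ × ℝ)‖ := norm_fst_le ((x, y) : ℝ × ℝ)
          _ ≤ Rf := hnf
          _ ≤ R := le_max_left _ _
      have hy : |y| ≤ R := by
        calc |y| = ‖y‖ := (Real.norm_eq_abs y).symm
          _ ≤ ‖((x, y) : ℝ × ℝ)‖ := norm_snd_le ((x, y) : ℝ × ℝ)
          _ ≤ Rf := hnf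
          _ ≤ R := le_max_left _ _
      have hx0 : |x0| ≤ R := by
        calc |x0| = ‖x0‖ := (Real.norm_eq_abs x0).symm
          _ ≤ ‖((x0, y0) : ℝ × ℝ)‖ := norm_fst_le ((x0, y0) : ℝ × ℝ)
          _ ≤ Rg := hng
          _ ≤ R := le_max_right _ _
      have hy0 : |y0| ≤ R := by
        calc |y0| = ‖y0‖ := (Real.norm_eq_abs y0).symm
          _ ≤ ‖((x0, y0) : ℝ × ℝ)‖ := norm_snd_le ((x0, y0) : ℝ × ℝ)
          _ ≤ Rg := hng
          _ ≤ R := le_max_right _ _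
      have hqmem : ((x, y, x0, y0) : ℝ × ℝ × ℝ × ℝ) ∈ Metric.closedBall 0 R := by
        rw [mem_closedBall_zero_iff]
        have hnorm4 : ‖((x, y, x0, y0) : ℝ × ℝ × ℝ × ℝ)‖
            = max ‖x‖ (max ‖y‖ (max ‖x0‖ ‖y0‖)) := by
          simp [Prod.norm_def]
        rw [hnorm4]
        simp only [Real.norm_eq_abs]
        exact max_le hx (max_le hy (max_le hx0 hy0))
      rw [Set.indicator_of_mem hqmem]
      refine pow_le_pow_left₀ (norm_nonneg _) ?_ 2
      rw [hcEdef]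
      -- norm computation
      have hphase : ‖Complex.exp (Complex.I * ((Φ t (x, y, x0, y0) : ℝ) : ℂ))‖ = 1 := by
        rw [mul_comm]
        exact Complex.norm_exp_ofReal_mul_I _
      have n1 : ∀ r : ℝ, ‖(r : ℂ)‖ = |r| := fun r => by
        rw [Complex.norm_real, Real.norm_eq_abs]
      rw [norm_mul, norm_mul, norm_mul, norm_mul, norm_mul, norm_mul, norm_mul,
        hphase, n1, n1, n1, n1]
      rw [abs_of_pos (by positivity : (0:ℝ) < (2*Real.pi)⁻¹),
        abs_of_nonneg (Real.sqrt_nonneg (B/2)), Real.abs_exp, abs_inv]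
      have hbrac := brac_bound B F γ t R x y x0 y0 ht hsin hx hy hx0 hy0
      have hexp := exppoly γ δ t a0 a1 a2 hγδ ht.le ha0 ha1' ha2'
      calc (2*Real.pi)⁻¹ * Real.sqrt (B/2) * Real.exp (γ*t) * ‖f (x, y)‖ * ‖g (x0, y0)‖
            * 1 * |Real.sin (B*t)|⁻¹
            * ‖((γ : ℂ) + ((B * Real.cot (B*t) : ℝ) : ℂ)
                + (Complex.I/4) * ((((F/B)^2 : ℝ) : ℂ) - ((2*F*(x + x0) : ℝ) : ℂ)
                    - (((B^2/(Real.sin (B*t))^2) : ℝ) : ℂ)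
                        * (((x - x0)^2 + (y - y0 + (F/B)*t)^2 : ℝ) : ℂ)
                    + ((2*F*Real.cot (B*t)*(y - y0 + (F/B)*t) : ℝ) : ℂ)))‖
          ≤ (2*Real.pi)⁻¹ * Real.sqrt (B/2) * Real.exp (γ*t) * |Mf| * |Mg|
            * 1 * |Real.sin (B*t)|⁻¹
            * ((a0 + a1*t + a2*t^2) / |Real.sin (B*t)|^2) := by
            have hf1 : ‖f (x, y)‖ ≤ |Mf| := (hMf _).trans (le_abs_self _)
            have hg1 : ‖g (x0, y0)‖ ≤ |Mg| := (hMg _).trans (le_abs_self _)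
            have hbrac' : ‖((γ : ℂ) + ((B * Real.cot (B*t) : ℝ) : ℂ)
                + (Complex.I/4) * ((((F/B)^2 : ℝ) : ℂ) - ((2*F*(x + x0) : ℝ) : ℂ)
                    - (((B^2/(Real.sin (B*t))^2) : ℝ) : ℂ)
                        * (((x - x0)^2 + (y - y0 + (F/B)*t)^2 : ℝ) : ℂ)
                    + ((2*F*Real.cot (B*t)*(y - y0 + (F/B)*t) : ℝ) : ℂ)))‖
                ≤ (a0 + a1*t + a2*t^2) / |Real.sin (B*t)|^2 := by
              rw [ha0def, ha1def, ha2def]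
              exact hbrac
            gcongr
        _ = c1 * (Real.exp (γ*t) * (a0 + a1*t + a2*t^2)) / |Real.sin (B*t)|^3 := by
            rw [hc1def]; ring
        _ ≤ c1 * ((a0 + a1*(1/(δ-γ)) + a2*(4/(δ-γ)^2)) * Real.exp (δ*t))
              / |Real.sin (B*t)|^3 := by
            apply (div_le_div_iff_of_pos_right (by positivity)).2
            exact mul_le_mul_of_nonneg_left hexp hc1
        _ = C0 * Real.exp (δ*t) / |Real.sin (B*t)|^3 := by
            rw [hC0def]; ring
    · rw [MeasureTheory.integral_indicator_const _ measurableSet_closedBall, smul_eq_mul]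
      exact le_of_eq (by rw [hVdef, measureReal_def])
  calc Real.sqrt (∫ q : ℝ × ℝ × ℝ × ℝ,
        ‖((2*Real.pi)⁻¹ : ℝ) * (Real.sqrt (B/2) : ℝ) * (Real.exp (γ*t) : ℝ)
            * f (q.1, q.2.1) * g (q.2.2.1, q.2.2.2)
            * Complex.exp (Complex.I * (Φ t q : ℝ))
            * ((Real.sin (B*t))⁻¹ : ℝ)
            * ((γ : ℂ) + (B * Real.cot (B*t) : ℝ)
                + (Complex.I/4) * (((F/B)^2 : ℝ) - (2*F*(q.1 + q.2.2.1) : ℝ)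
                    - ((B^2/(Real.sin (B*t))^2) : ℝ)
                        * (((q.1 - q.2.2.1)^2 + (q.2.1 - q.2.2.2 + (F/B)*t)^2 : ℝ))
                    + (2*F*Real.cot (B*t)*(q.2.1 - q.2.2.2 + (F/B)*t) : ℝ)))‖^2)
      ≤ Real.sqrt (V * cE^2) := Real.sqrt_le_sqrt hmono
    _ = Real.sqrt V * cE := by
        rw [Real.sqrt_mul hV0, Real.sqrt_sq hcE0]
    _ ≤ (Real.sqrt V + 1) * (C0 + 1) * Real.exp (δ*t) / |Real.sin (B*t)|^3 := by
        rw [hcEdef]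
        have h1 : Real.sqrt V * C0 ≤ (Real.sqrt V + 1) * (C0 + 1) := by
          nlinarith [Real.sqrt_nonneg V, hC00]
        calc Real.sqrt V * (C0 * Real.exp (δ*t) / |Real.sin (B*t)|^3)
            = (Real.sqrt V * C0) * (Real.exp (δ*t) / |Real.sin (B*t)|^3) := by ring
          _ ≤ ((Real.sqrt V + 1) * (C0 + 1)) * (Real.exp (δ*t) / |Real.sin (B*t)|^3) :=
              mul_le_mul_of_nonneg_right h1 (by positivity)
          _ = (Real.sqrt V + 1) * (C0 + 1) * Real.exp (δ*t) / |Real.sin (B*t)|^3 := by ring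
end
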